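/- arXiv:2012.06394 — 2 statements merged into one kernel-verified Lean document; each statement's English description precedes it below -/
import Mathlib

section
/- A core inequality β₀ + Σ_{j=1}^n β_j x_j + β′ y ≥ 0 is valid for conv(G) if and only if L_k(β₀,β) + β′·m(x^k) ≥ 0 for every k ∈ {0,…,n}. -/
open Finset

/-- The symmetric multilinear polynomial `m(x) = ∑_{i=2}^n c_i ∑_{|J|=i} ∏_{j∈J} x_j`. -/
noncomputable def mPoly (n : ℕ) (c : ℕ → ℝ) (x : Fin n → ℝ) : ℝ :=
  ∑ i ∈ Finset.Icc 2 n, c i *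
    ∑ J ∈ Finset.powersetCard i (Finset.univ : Finset (Fin n)), ∏ j ∈ J, x j

/-- The box `X = [ℓ,u]^n`. -/
def Xbox (n : ℕ) (ℓ u : ℝ) : Set (Fin n → ℝ) :=
  {x | ∀ j, x j ∈ Set.Icc ℓ u}

/-- The graph `G = {(x,y) : x ∈ X, y = m(x)}`. -/
def Gset (n : ℕ) (ℓ u : ℝ) (c : ℕ → ℝ) : Set ((Fin n → ℝ) × ℝ) :=
  {p | p.1 ∈ Xbox n ℓ u ∧ p.2 = mPoly n c p.1}

/-- The point `x^k` whose first `k` coordinates are `u` and remaining ones are `ℓ`. -/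
def xpt (n : ℕ) (ℓ u : ℝ) (k : ℕ) : Fin n → ℝ :=
  fun j => if (j : ℕ) < k then u else ℓ

/-- `m(x^k)`. -/
noncomputable def mval (n : ℕ) (ℓ u : ℝ) (c : ℕ → ℝ) (k : ℕ) : ℝ :=
  mPoly n c (xpt n ℓ u k)

/-- `L_k(β₀,β) = β₀ + u ∑_{j=1}^k β_j + ℓ ∑_{j=k+1}^n β_j`. -/
noncomputable def Lk (n : ℕ) (ℓ u : ℝ) (β₀ : ℝ) (β : Fin n → ℝ) (k : ℕ) : ℝ :=
  β₀ + u * ∑ j ∈ Finset.univ.filter (fun j : Fin n => (j : ℕ) < k), β j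
     + ℓ * ∑ j ∈ Finset.univ.filter (fun j : Fin n => k ≤ (j : ℕ)), β j

/-- The left-hand side `β₀ + ∑_j β_j x_j + β′ y` of an inequality, at the point `p = (x,y)`. -/
noncomputable def ineqLhs (n : ℕ) (β₀ : ℝ) (β : Fin n → ℝ) (β' : ℝ)
    (p : (Fin n → ℝ) × ℝ) : ℝ :=
  β₀ + ∑ j, β j * p.1 j + β' * p.2

/-- A core inequality: `β′ ∈ {1,-1}` and nondecreasing coefficients `β₁ ≤ … ≤ βₙ`. -/
def IsCore (n : ℕ) (β : Fin n → ℝ) (β' : ℝ) : Prop :=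
  (β' = 1 ∨ β' = -1) ∧ Monotone β

/-- Validity of the inequality `β₀ + ∑_j β_j x_j + β′ y ≥ 0` on `conv(G)`. -/
def IsValid (n : ℕ) (ℓ u : ℝ) (c : ℕ → ℝ) (β₀ : ℝ) (β : Fin n → ℝ) (β' : ℝ) : Prop :=
  ∀ p ∈ convexHull ℝ (Gset n ℓ u c), 0 ≤ ineqLhs n β₀ β β' p

/-- The point `p` satisfies the inequality exactly (with equality). -/
def ExactAt (n : ℕ) (β₀ : ℝ) (β : Fin n → ℝ) (β' : ℝ) (p : (Fin n → ℝ) × ℝ) : Prop :=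
  ineqLhs n β₀ β β' p = 0

/-- Facet-defining: there are `n+1` affinely independent points of `conv(G)`
satisfying the inequality exactly. -/
def IsFacet (n : ℕ) (ℓ u : ℝ) (c : ℕ → ℝ) (β₀ : ℝ) (β : Fin n → ℝ) (β' : ℝ) : Prop :=
  ∃ pts : Fin (n + 1) → (Fin n → ℝ) × ℝ,
    AffineIndependent ℝ pts ∧
    ∀ i, pts i ∈ convexHull ℝ (Gset n ℓ u c) ∧ ExactAt n β₀ β β' (pts i)

/-- The point `(x^k, m(x^k))` of `G`. -/
noncomputable def vtx (n : ℕ) (ℓ u : ℝ) (c : ℕ → ℝ) (k : ℕ) : (Fin n → ℝ) × ℝ :=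
  (xpt n ℓ u k, mval n ℓ u c k)

section Aux
variable {n : ℕ} {ℓ u : ℝ} {c : ℕ → ℝ}

/-- a strictly monotone `g : Fin k → ℕ` satisfies `m ≤ g m`. -/
lemma strictMono_le_apply {k : ℕ} (g : Fin k → ℕ) (hg : StrictMono g) :
    ∀ m (h : m < k), m ≤ g ⟨m, h⟩ := by
  intro m
  induction m with
  | zero => intro h; exact Nat.zero_le _
  | succ m ih =>
    intro h
    have hm : m < k := Nat.lt_of_succ_lt h
    have h1 : g ⟨m, hm⟩ < g ⟨m + 1, h⟩ := hg (by simp [Fin.lt_def])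
    have h2 := ih hm
    omega

lemma filter_lt_eq_image {k : ℕ} (hk : k ≤ n) :
    univ.filter (fun j : Fin n => (j : ℕ) < k) =
      Finset.image (fun i : Fin k => (⟨(i : ℕ), lt_of_lt_of_le i.2 hk⟩ : Fin n)) univ := by
  ext j
  simp only [mem_filter, mem_univ, true_and, mem_image]
  constructor
  · intro h; exact ⟨⟨(j : ℕ), h⟩, Fin.ext rfl⟩
  · rintro ⟨i, rfl⟩; exact i.2

lemma card_filter_lt {k : ℕ} (hk : k ≤ n) :
    (univ.filter (fun j : Fin n => (j : ℕ) < k)).card = k := by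
  rw [filter_lt_eq_image hk, Finset.card_image_of_injective, Finset.card_univ, Fintype.card_fin]
  intro a b hab
  simpa [Fin.ext_iff] using hab

/-- sum over the `k` smallest indices is a lower bound for monotone β. -/
lemma sum_smallest_le {β : Fin n → ℝ} (hβ : Monotone β) (S : Finset (Fin n)) :
    ∑ j ∈ univ.filter (fun j : Fin n => (j : ℕ) < S.card), β j ≤ ∑ j ∈ S, β j := by
  have hkn : S.card ≤ n := by
    simpa using Finset.card_le_univ S
  have hrfl : S.card = S.card := rfl
  set f := S.orderEmbOfFin hrfl with hf
  have hSimg : S = Finset.image (fun i => f i) univ := by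
    ext j
    simp only [mem_image, mem_univ, true_and]
    constructor
    · intro hj
      have : j ∈ Set.range (⇑f) := by rw [Finset.range_orderEmbOfFin]; exact hj
      obtain ⟨i, hi⟩ := this; exact ⟨i, hi⟩
    · rintro ⟨i, rfl⟩; exact Finset.orderEmbOfFin_mem S hrfl i
  have hL : ∑ j ∈ univ.filter (fun j : Fin n => (j : ℕ) < S.card), β j
      = ∑ i : Fin S.card, β ⟨(i : ℕ), lt_of_lt_of_le i.2 hkn⟩ := by
    rw [filter_lt_eq_image hkn]
    exact Finset.sum_image (by intro a _ b _ hab; simpa [Fin.ext_iff] using hab)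
  have hR : ∑ j ∈ S, β j = ∑ i : Fin S.card, β (f i) := by
    conv_lhs => rw [hSimg]
    exact Finset.sum_image (by intro a _ b _ hab; exact f.injective hab)
  rw [hL, hR]
  apply Finset.sum_le_sum
  intro i _
  apply hβ
  rw [Fin.le_def]
  have : StrictMono (fun i : Fin S.card => ((f i : Fin n) : ℕ)) :=
    fun a b hab => by exact_mod_cast (f.strictMono hab)
  exact strictMono_le_apply _ this (i : ℕ) i.2

/-- permutation invariance of `mPoly`. -/
lemma mPoly_perm (σ : Equiv.Perm (Fin n)) (x : Fin n → ℝ) :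
    mPoly n c (x ∘ σ) = mPoly n c x := by
  unfold mPoly
  refine Finset.sum_congr rfl fun i _ => ?_
  congr 1
  refine Finset.sum_nbij' (i := fun J => J.map σ.toEmbedding)
    (j := fun J => J.map σ.symm.toEmbedding) ?_ ?_ ?_ ?_ ?_
  · intro J hJ
    simp only [mem_powersetCard] at hJ ⊢
    exact ⟨Finset.subset_univ _, by rw [Finset.card_map]; exact hJ.2⟩
  · intro J hJ
    simp only [mem_powersetCard] at hJ ⊢
    exact ⟨Finset.subset_univ _, by rw [Finset.card_map]; exact hJ.2⟩
  · intro J _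
    ext j; simp
  · intro J _
    ext j; simp
  · intro J _
    rw [Finset.prod_map]
    rfl

/-- existence of a permutation sorting `S` to an initial segment. -/
lemma exists_sorting_perm (S : Finset (Fin n)) :
    ∃ σ : Equiv.Perm (Fin n), ∀ j, (j ∈ S ↔ ((σ j : ℕ) < S.card)) := by
  have hkn : S.card ≤ n := by simpa using Finset.card_le_univ S
  have hc : Fintype.card {j : Fin n // j ∈ S} =
      Fintype.card {j : Fin n // (j : ℕ) < S.card} := by
    rw [Fintype.card_subtype (fun j : Fin n => (j : ℕ) < S.card), card_filter_lt hkn]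
    rw [Fintype.card_coe]
  have hc' : Fintype.card {j : Fin n // ¬ j ∈ S} =
      Fintype.card {j : Fin n // ¬ (j : ℕ) < S.card} := by
    rw [Fintype.card_subtype_compl, Fintype.card_subtype_compl, hc]
  refine ⟨Equiv.subtypeCongr (Fintype.equivOfCardEq hc) (Fintype.equivOfCardEq hc'), fun j => ?_⟩
  by_cases hj : j ∈ S
  · simp only [hj, true_iff]
    have : Equiv.subtypeCongr (Fintype.equivOfCardEq hc) (Fintype.equivOfCardEq hc') j
        = ((Fintype.equivOfCardEq hc) ⟨j, hj⟩ : Fin n) := by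
      simp [Equiv.subtypeCongr, hj]
    rw [this]
    exact ((Fintype.equivOfCardEq hc) ⟨j, hj⟩).2
  · simp only [hj, false_iff]
    have : Equiv.subtypeCongr (Fintype.equivOfCardEq hc) (Fintype.equivOfCardEq hc') j
        = ((Fintype.equivOfCardEq hc') ⟨j, hj⟩ : Fin n) := by
      simp [Equiv.subtypeCongr, hj]
    rw [this]
    exact ((Fintype.equivOfCardEq hc') ⟨j, hj⟩).2

/-- the value of `mPoly` at a 0/1 vertex only depends on the cardinality. -/
lemma mPoly_vertex (S : Finset (Fin n)) :
    mPoly n c (fun j => if j ∈ S then u else ℓ) = mval n ℓ u c S.card := by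
  obtain ⟨σ, hσ⟩ := exists_sorting_perm S
  have hx : (fun j => if j ∈ S then u else ℓ) = (xpt n ℓ u S.card) ∘ σ := by
    funext j
    simp only [Function.comp, xpt]
    by_cases hj : j ∈ S
    · rw [if_pos hj, if_pos ((hσ j).1 hj)]
    · rw [if_neg hj, if_neg (fun h => hj ((hσ j).2 h))]
  rw [hx, mPoly_perm]
  rfl

/-- `mPoly` is affine in each coordinate. -/
lemma mPoly_update (x : Fin n → ℝ) (t : Fin n) :
    ∃ A B : ℝ, ∀ s : ℝ, mPoly n c (Function.update x t s) = A + B * s := by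
  classical
  refine ⟨∑ i ∈ Icc 2 n, c i *
      ∑ J ∈ (powersetCard i (univ : Finset (Fin n))).filter (fun J => t ∉ J), ∏ j ∈ J, x j,
    ∑ i ∈ Icc 2 n, c i *
      ∑ J ∈ (powersetCard i (univ : Finset (Fin n))).filter (fun J => t ∈ J),
        ∏ j ∈ J.erase t, x j, ?_⟩
  intro s
  unfold mPoly
  have key : ∀ i ∈ Icc 2 n,
      c i * ∑ J ∈ powersetCard i (univ : Finset (Fin n)), ∏ j ∈ J, Function.update x t s j
      = c i * (∑ J ∈ (powersetCard i (univ : Finset (Fin n))).filter (fun J => t ∉ J),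
          ∏ j ∈ J, x j)
        + (c i * ∑ J ∈ (powersetCard i (univ : Finset (Fin n))).filter (fun J => t ∈ J),
          ∏ j ∈ J.erase t, x j) * s := by
    intro i _
    rw [← Finset.sum_filter_add_sum_filter_not (powersetCard i (univ : Finset (Fin n)))
      (fun J => t ∈ J) (fun J => ∏ j ∈ J, Function.update x t s j)]
    have h1 : ∑ J ∈ (powersetCard i (univ : Finset (Fin n))).filter (fun J => t ∈ J),
        ∏ j ∈ J, Function.update x t s j
        = ∑ J ∈ (powersetCard i (univ : Finset (Fin n))).filter (fun J => t ∈ J),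
            s * ∏ j ∈ J.erase t, x j := by
      refine Finset.sum_congr rfl fun J hJ => ?_
      have ht : t ∈ J := (mem_filter.mp hJ).2
      rw [← Finset.mul_prod_erase J _ ht, Function.update_self]
      congr 1
      exact Finset.prod_congr rfl fun j hj =>
        Function.update_of_ne (Finset.ne_of_mem_erase hj) _ _
    have h2 : ∑ J ∈ (powersetCard i (univ : Finset (Fin n))).filter (fun J => ¬ t ∈ J),
        ∏ j ∈ J, Function.update x t s j
        = ∑ J ∈ (powersetCard i (univ : Finset (Fin n))).filter (fun J => ¬ t ∈ J),
            ∏ j ∈ J, x j := by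
      refine Finset.sum_congr rfl fun J hJ => ?_
      exact Finset.prod_congr rfl fun j hj =>
        Function.update_of_ne (by rintro rfl; exact (mem_filter.mp hJ).2 hj) _ _
    rw [h1, h2, ← Finset.mul_sum]
    ring
  rw [Finset.sum_congr rfl key, Finset.sum_add_distrib, ← Finset.sum_mul]

end Aux

section Main
variable {n : ℕ} {ℓ u : ℝ} {c : ℕ → ℝ} {β₀ : ℝ} {β : Fin n → ℝ} {β' : ℝ}

/-- the lhs as a function of `x` on the graph. -/
noncomputable def Fg (n : ℕ) (c : ℕ → ℝ) (β₀ : ℝ) (β : Fin n → ℝ) (β' : ℝ)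
    (x : Fin n → ℝ) : ℝ := ineqLhs n β₀ β β' (x, mPoly n c x)

lemma Fg_update (x : Fin n → ℝ) (t : Fin n) :
    ∃ A B : ℝ, ∀ s : ℝ, Fg n c β₀ β β' (Function.update x t s) = A + B * s := by
  obtain ⟨A0, B0, h0⟩ := mPoly_update (c := c) x t
  refine ⟨β₀ + (∑ j ∈ univ.erase t, β j * x j) + β' * A0, β t + β' * B0, fun s => ?_⟩
  have hsum : ∑ j, β j * Function.update x t s j
      = β t * s + ∑ j ∈ univ.erase t, β j * x j := by
    rw [← Finset.add_sum_erase univ _ (mem_univ t), Function.update_self]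
    congr 1
    exact Finset.sum_congr rfl fun j hj => by
      rw [Function.update_of_ne (Finset.ne_of_mem_erase hj)]
  simp only [Fg, ineqLhs, hsum, h0]
  ring

/-- minimum over the box is attained at a 0/1 vertex. -/
lemma vertex_red (hlu : ℓ ≤ u) (x : Fin n → ℝ) (hx : x ∈ Xbox n ℓ u) :
    ∃ S : Finset (Fin n),
      Fg n c β₀ β β' (fun j => if j ∈ S then u else ℓ) ≤ Fg n c β₀ β β' x := by
  have main : ∀ t : ℕ, ∃ x' : Fin n → ℝ, x' ∈ Xbox n ℓ u ∧
      (∀ j : Fin n, (j : ℕ) < t → x' j = ℓ ∨ x' j = u) ∧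
      Fg n c β₀ β β' x' ≤ Fg n c β₀ β β' x := by
    intro t
    induction t with
    | zero => exact ⟨x, hx, fun j hj => absurd hj (Nat.not_lt_zero _), le_refl _⟩
    | succ t ih =>
      obtain ⟨x', hx', hext, hle⟩ := ih
      by_cases ht : t < n
      · set j0 : Fin n := ⟨t, ht⟩
        obtain ⟨A, B, hAB⟩ := Fg_update (c := c) (β₀ := β₀) (β := β) (β' := β') x' j0
        set s : ℝ := if 0 ≤ B then ℓ else u with hs
        have hx'j0 := hx' j0
        have hbox : ℓ ≤ x' j0 ∧ x' j0 ≤ u := ⟨hx'j0.1, hx'j0.2⟩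
        have hval : Fg n c β₀ β β' x' = A + B * x' j0 := by
          have := hAB (x' j0)
          rwa [Function.update_eq_self] at this
        have hle2 : Fg n c β₀ β β' (Function.update x' j0 s) ≤ Fg n c β₀ β β' x' := by
          rw [hAB s, hval]
          by_cases hB : 0 ≤ B
          · simp only [hs, if_pos hB]
            nlinarith [hbox.1]
          · simp only [hs, if_neg hB]
            push_neg at hB
            nlinarith [hbox.2]
        refine ⟨Function.update x' j0 s, ?_, ?_, le_trans hle2 hle⟩
        · intro j
          by_cases hj : j = j0
          · subst hj
            rw [Function.update_self]
            by_cases hB : 0 ≤ B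
            · simp only [hs, if_pos hB]; exact ⟨le_refl _, hlu⟩
            · simp only [hs, if_neg hB]; exact ⟨hlu, le_refl _⟩
          · rw [Function.update_of_ne hj]; exact hx' j
        · intro j hj
          by_cases hjt : (j : ℕ) < t
          · have hne : j ≠ j0 := by
              intro h; rw [h] at hjt; exact absurd hjt (lt_irrefl t)
            rw [Function.update_of_ne hne]; exact hext j hjt
          · have hje : j = j0 := by
              apply Fin.ext
              show (j : ℕ) = t
              have h1 : (j : ℕ) ≤ t := Nat.lt_succ_iff.mp hj
              omega
            subst hje
            rw [Function.update_self]
            by_cases hB : 0 ≤ B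
            · exact Or.inl (by simp [hs, hB])
            · exact Or.inr (by simp [hs, hB])
      · refine ⟨x', hx', fun j hj => ?_, hle⟩
        exact hext j (lt_of_lt_of_le j.2 (Nat.le_of_not_lt ht))
  obtain ⟨x', hx', hext, hle⟩ := main n
  classical
  refine ⟨univ.filter (fun j => x' j = u), ?_⟩
  have hxeq : (fun j => if j ∈ univ.filter (fun j => x' j = u) then u else ℓ) = x' := by
    funext j
    simp only [mem_filter, mem_univ, true_and]
    by_cases hj : x' j = u
    · rw [if_pos hj, hj]
    · rw [if_neg hj]
      rcases hext j j.2 with h | h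
      · exact h.symm
      · exact absurd h hj
  rw [hxeq]; exact hle

lemma lhs_vtx (k : ℕ) :
    ineqLhs n β₀ β β' (vtx n ℓ u c k) = Lk n ℓ u β₀ β k + β' * mval n ℓ u c k := by
  simp only [ineqLhs, vtx, Lk, xpt]
  have hsplit := Finset.sum_filter_add_sum_filter_not (univ : Finset (Fin n))
    (fun j : Fin n => (j : ℕ) < k) (fun j => β j * (if (j : ℕ) < k then u else ℓ))
  rw [← hsplit]
  have h1 : ∑ j ∈ univ.filter (fun j : Fin n => (j : ℕ) < k),
      β j * (if (j : ℕ) < k then u else ℓ)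
      = u * ∑ j ∈ univ.filter (fun j : Fin n => (j : ℕ) < k), β j := by
    rw [Finset.mul_sum]
    refine Finset.sum_congr rfl fun j hj => ?_
    rw [if_pos (mem_filter.mp hj).2]; ring
  have hfe : univ.filter (fun j : Fin n => ¬ (j : ℕ) < k)
      = univ.filter (fun j : Fin n => k ≤ (j : ℕ)) := by
    ext j; simp [not_lt]
  have h2 : ∑ j ∈ univ.filter (fun j : Fin n => ¬ (j : ℕ) < k),
      β j * (if (j : ℕ) < k then u else ℓ)
      = ℓ * ∑ j ∈ univ.filter (fun j : Fin n => k ≤ (j : ℕ)), β j := by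
    rw [hfe, Finset.mul_sum]
    refine Finset.sum_congr rfl fun j hj => ?_
    rw [if_neg (not_lt.mpr (mem_filter.mp hj).2)]; ring
  rw [h1, h2]; ring

lemma lhs_convex :
    Convex ℝ {q : (Fin n → ℝ) × ℝ | 0 ≤ ineqLhs n β₀ β β' q} := by
  intro p hp q hq a b ha hb hab
  have key : ineqLhs n β₀ β β' (a • p + b • q)
      = a * ineqLhs n β₀ β β' p + b * ineqLhs n β₀ β β' q := by
    have h1 : ∑ j, β j * ((a • p + b • q).1 j)
        = a * (∑ j, β j * p.1 j) + b * (∑ j, β j * q.1 j) := by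
      rw [Finset.mul_sum, Finset.mul_sum, ← Finset.sum_add_distrib]
      refine Finset.sum_congr rfl fun j _ => ?_
      simp only [Prod.fst_add, Prod.smul_fst, Pi.add_apply, Pi.smul_apply, smul_eq_mul]
      ring
    have h2 : (a • p + b • q).2 = a * p.2 + b * q.2 := rfl
    simp only [ineqLhs, h1, h2]
    linear_combination (-β₀) * hab
  show (0:ℝ) ≤ ineqLhs n β₀ β β' (a • p + b • q)
  rw [key]
  exact add_nonneg (mul_nonneg ha hp) (mul_nonneg hb hq)

end Main

/-- A core inequality is valid for `conv(G)` iff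
`L_k(β₀,β) + β′ m(x^k) ≥ 0` for every `k ∈ {0,…,n}`. -/
theorem stmt0 (n : ℕ) (hn : 2 ≤ n) (ℓ u : ℝ) (hlu : ℓ < u) (c : ℕ → ℝ)
    (β₀ : ℝ) (β : Fin n → ℝ) (β' : ℝ) (hcore : IsCore n β β') :
    IsValid n ℓ u c β₀ β β' ↔
      ∀ k ≤ n, 0 ≤ Lk n ℓ u β₀ β k + β' * mval n ℓ u c k := by
  classical
  constructor
  · intro hv k _
    have hmem : vtx n ℓ u c k ∈ Gset n ℓ u c := by
      refine ⟨fun j => ?_, rfl⟩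
      simp only [xpt, vtx]
      split
      · exact ⟨le_of_lt hlu, le_refl _⟩
      · exact ⟨le_refl _, le_of_lt hlu⟩
    have := hv _ (subset_convexHull ℝ _ hmem)
    rwa [lhs_vtx] at this
  · intro h p hp
    have hG : Gset n ℓ u c ⊆ {q : (Fin n → ℝ) × ℝ | 0 ≤ ineqLhs n β₀ β β' q} := by
      rintro ⟨x, y⟩ ⟨hx, hy⟩
      have hy' : y = mPoly n c x := hy
      subst hy'
      show (0:ℝ) ≤ Fg n c β₀ β β' x
      obtain ⟨S, hS⟩ := vertex_red (c := c) (β₀ := β₀) (β := β) (β' := β') (le_of_lt hlu) x hx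
      refine le_trans ?_ hS
      -- 0 ≤ Fg at vertex S
      have hkn : S.card ≤ n := by simpa using Finset.card_le_univ S
      have h0 := h S.card hkn
      -- compute Fg at vertex
      have hmv : mPoly n c (fun j => if j ∈ S then u else ℓ) = mval n ℓ u c S.card :=
        mPoly_vertex S
      have hsum : ∑ j, β j * (if j ∈ S then u else ℓ)
          = u * ∑ j ∈ S, β j + ℓ * ∑ j ∈ univ.filter (fun j => ¬ j ∈ S), β j := by
        rw [← Finset.sum_filter_add_sum_filter_not (univ : Finset (Fin n)) (fun j => j ∈ S)
          (fun j => β j * (if j ∈ S then u else ℓ))]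
        have e1 : univ.filter (fun j => j ∈ S) = S := by
          rw [Finset.filter_mem_eq_inter, Finset.univ_inter]
        congr 1
        · rw [e1, Finset.mul_sum]
          refine Finset.sum_congr rfl fun j hj => ?_
          rw [if_pos hj]; ring
        · rw [Finset.mul_sum]
          refine Finset.sum_congr rfl fun j hj => ?_
          rw [if_neg (mem_filter.mp hj).2]; ring
      -- totals
      have htot1 : ∑ j ∈ S, β j + ∑ j ∈ univ.filter (fun j => ¬ j ∈ S), β j
          = ∑ j, β j := by
        have := Finset.sum_filter_add_sum_filter_not (univ : Finset (Fin n))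
          (fun j => j ∈ S) β
        rw [Finset.filter_mem_eq_inter, Finset.univ_inter] at this
        exact this
      have htot2 : ∑ j ∈ univ.filter (fun j : Fin n => (j : ℕ) < S.card), β j
          + ∑ j ∈ univ.filter (fun j : Fin n => S.card ≤ (j : ℕ)), β j = ∑ j, β j := by
        have := Finset.sum_filter_add_sum_filter_not (univ : Finset (Fin n))
          (fun j : Fin n => (j : ℕ) < S.card) β
        have hfe : univ.filter (fun j : Fin n => ¬ (j : ℕ) < S.card)
            = univ.filter (fun j : Fin n => S.card ≤ (j : ℕ)) := by
          ext j; simp [not_lt]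
        rw [hfe] at this
        exact this
      have hmono : ∑ j ∈ univ.filter (fun j : Fin n => (j : ℕ) < S.card), β j
          ≤ ∑ j ∈ S, β j := sum_smallest_le hcore.2 S
      -- conclude
      have hFg : Fg n c β₀ β β' (fun j => if j ∈ S then u else ℓ)
          = β₀ + (u * ∑ j ∈ S, β j + ℓ * ∑ j ∈ univ.filter (fun j => ¬ j ∈ S), β j)
            + β' * mval n ℓ u c S.card := by
        simp only [Fg, ineqLhs, hmv, hsum]
      rw [hFg]
      rw [Lk] at h0
      have hC : ∑ j ∈ univ.filter (fun j => ¬ j ∈ S), β j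
          = (∑ j, β j) - ∑ j ∈ S, β j := by linarith
      have hD : ∑ j ∈ univ.filter (fun j : Fin n => S.card ≤ (j : ℕ)), β j
          = (∑ j, β j) - ∑ j ∈ univ.filter (fun j : Fin n => (j : ℕ) < S.card), β j := by
        linarith
      rw [hC]
      rw [hD] at h0
      nlinarith [mul_nonneg (sub_nonneg.mpr (le_of_lt hlu))
        (sub_nonneg.mpr hmono), h0]
    exact convexHull_min hG lhs_convex hp
end

section
/- Let β̄₀ + Σ_{j=1}^n β̄_j x_j + β′ y ≥ 0 and β̂₀ + Σ_{j=1}^n β̂_j x_j + β′ y ≥ 0 be two valid core inequalities for conv(G) with the same β′. If L_k(β̄₀,β̄) ≤ L_k(β̂₀,β̂) for all k ∈ {0,…,n}, with strict inequality for at least one k, then the inequality β̂₀ + Σ_{j=1}^n β̂_j x_j + β′ y ≥ 0 is not facet-defining for conv(G). -/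
open Finset

namespace St6
open Finset
variable {n : ℕ} {ℓ u : ℝ} {c : ℕ → ℝ}

def vert (n : ℕ) (ℓ u : ℝ) (S : Finset (Fin n)) : Fin n → ℝ := fun j => if j ∈ S then u else ℓ

def pre (n k : ℕ) : Finset (Fin n) := Finset.univ.filter fun j : Fin n => (j : ℕ) < k

lemma card_pre (n k : ℕ) (h : k ≤ n) : (pre n k).card = k := by
  apply Finset.card_eq_of_bijective (fun i hi => ⟨i, lt_of_lt_of_le hi h⟩)
  · intro a ha
    simp only [pre, mem_filter] at ha
    exact ⟨a.1, ha.2, by simp⟩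
  · intro i hi
    simp [pre]
    exact hi
  · intro i j hi hj hij
    simpa [Fin.ext_iff] using hij

lemma mPoly_update (n : ℕ) (c : ℕ → ℝ) (x : Fin n → ℝ) (j : Fin n) (s : ℝ) :
    mPoly n c (Function.update x j s) =
      (∑ i ∈ Finset.Icc 2 n, c i *
        ∑ J ∈ (Finset.powersetCard i (Finset.univ : Finset (Fin n))).filter
          (fun J => ¬ j ∈ J), ∏ j' ∈ J, x j')
      + s * ∑ i ∈ Finset.Icc 2 n, c i *
        ∑ J ∈ (Finset.powersetCard i (Finset.univ : Finset (Fin n))).filter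
          (fun J => j ∈ J), ∏ j' ∈ J.erase j, x j' := by
  unfold mPoly
  rw [Finset.mul_sum, ← Finset.sum_add_distrib]
  refine Finset.sum_congr rfl fun i _ => ?_
  rw [← Finset.sum_filter_add_sum_filter_not
    (Finset.powersetCard i (Finset.univ : Finset (Fin n))) (fun J => j ∈ J)]
  have h1 : ∀ J ∈ (Finset.powersetCard i (Finset.univ : Finset (Fin n))).filter
      (fun J => j ∈ J), ∏ j' ∈ J, Function.update x j s j' = s * ∏ j' ∈ J \ {j}, x j' := by
    intro J hJ
    exact Finset.prod_update_of_mem (Finset.mem_filter.mp hJ).2 x s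
  have h2 : ∀ J ∈ (Finset.powersetCard i (Finset.univ : Finset (Fin n))).filter
      (fun J => ¬ j ∈ J), ∏ j' ∈ J, Function.update x j s j' = ∏ j' ∈ J, x j' := by
    intro J hJ
    exact Finset.prod_update_of_notMem (Finset.mem_filter.mp hJ).2 x s
  have h3 : c i * ∑ J ∈ (Finset.powersetCard i (Finset.univ : Finset (Fin n))).filter
      (fun J => j ∈ J), (s * ∏ j' ∈ J \ {j}, x j') =
      s * (c i * ∑ J ∈ (Finset.powersetCard i (Finset.univ : Finset (Fin n))).filter
      (fun J => j ∈ J), ∏ j' ∈ J.erase j, x j') := by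
    rw [Finset.mul_sum, Finset.mul_sum, Finset.mul_sum]
    refine Finset.sum_congr rfl fun J _ => ?_
    rw [Finset.erase_eq]
    ring
  rw [Finset.sum_congr rfl h1, Finset.sum_congr rfl h2, mul_add, h3, add_comm]

lemma mPoly_perm (x : Fin n → ℝ) (σ : Equiv.Perm (Fin n)) :
    mPoly n c (x ∘ σ) = mPoly n c x := by
  unfold mPoly
  refine Finset.sum_congr rfl fun i _ => ?_
  congr 1
  refine Finset.sum_equiv σ.finsetCongr ?_ ?_
  · intro J; simp [Finset.mem_powersetCard_univ]
  · intro J hJ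
    simp only [Equiv.finsetCongr_apply]
    rw [Finset.prod_map]
    rfl

lemma vert_eq_comp (S : Finset (Fin n)) (hk : S.card ≤ n) :
    ∃ σ : Equiv.Perm (Fin n), vert n ℓ u S = (vert n ℓ u (pre n S.card)) ∘ σ := by
  classical
  have hc : S.card = (pre n S.card).card := (card_pre n S.card hk).symm
  let e : {x // x ∈ S} ≃ {x // x ∈ pre n S.card} := Finset.equivOfCardEq hc
  have hcc : (Sᶜ : Finset (Fin n)).card = ((pre n S.card)ᶜ : Finset (Fin n)).card := by
    rw [Finset.card_compl, Finset.card_compl, card_pre n S.card hk]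
  let g : {x // x ∈ (Sᶜ : Finset (Fin n))} ≃ {x // x ∈ ((pre n S.card)ᶜ : Finset (Fin n))} :=
    Finset.equivOfCardEq hcc
  let f : {x // ¬ x ∈ S} ≃ {x // ¬ x ∈ pre n S.card} :=
    ((Equiv.subtypeEquivRight (fun x => (Finset.mem_compl (s := S)).symm)).trans g).trans
      (Equiv.subtypeEquivRight (fun x => Finset.mem_compl))
  let σ : Equiv.Perm (Fin n) := Equiv.subtypeCongr e f
  refine ⟨σ, ?_⟩
  have hmem : ∀ j, σ j ∈ pre n S.card ↔ j ∈ S := by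
    intro j
    by_cases h : j ∈ S
    · have hσ : σ j = (e ⟨j, h⟩ : Fin n) := by
        simp [σ, Equiv.subtypeCongr, Equiv.sumCompl_symm_apply_of_pos h]
      rw [hσ]
      simpa [h] using (e ⟨j, h⟩).2
    · have hσ : σ j = (f ⟨j, h⟩ : Fin n) := by
        simp [σ, Equiv.subtypeCongr, Equiv.sumCompl_symm_apply_of_neg h]
      rw [hσ]
      simpa [h] using (f ⟨j, h⟩).2
  funext j
  simp only [Function.comp_apply, vert]
  by_cases h : j ∈ S
  · rw [if_pos h, if_pos ((hmem j).mpr h)]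
  · rw [if_neg h, if_neg (fun hm => h ((hmem j).mp hm))]

lemma filter_mem_eq (S : Finset (Fin n)) : Finset.univ.filter (fun j => j ∈ S) = S := by
  ext j; simp

lemma filter_not_mem_eq (S : Finset (Fin n)) : Finset.univ.filter (fun j => ¬ j ∈ S) = Sᶜ := by
  ext j; simp

lemma sum_mul_vert (β : Fin n → ℝ) (S : Finset (Fin n)) :
    ∑ j, β j * vert n ℓ u S j = u * ∑ j ∈ S, β j + ℓ * ∑ j ∈ Sᶜ, β j := by
  rw [← Finset.sum_filter_add_sum_filter_not Finset.univ (fun j => j ∈ S),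
    filter_mem_eq, filter_not_mem_eq, Finset.mul_sum, Finset.mul_sum]
  congr 1
  · refine Finset.sum_congr rfl fun j hj => ?_
    simp [vert, hj, mul_comm]
  · refine Finset.sum_congr rfl fun j hj => ?_
    have : ¬ j ∈ S := by simpa using hj
    simp [vert, this, mul_comm]

lemma sum_compl_eq (β : Fin n → ℝ) (S : Finset (Fin n)) :
    ∑ j ∈ Sᶜ, β j = ∑ j, β j - ∑ j ∈ S, β j := by
  have := Finset.sum_compl_add_sum S β
  linarith

/-- mini-lemma: strict monotone map on Fin grows at least like identity -/
lemma le_strictMono {k m : ℕ} (g : Fin k → Fin m) (hg : StrictMono g) :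
    ∀ i : Fin k, (i : ℕ) ≤ (g i : ℕ) := by
  have H : ∀ M : ℕ, ∀ i : Fin k, (i : ℕ) = M → M ≤ (g i : ℕ) := by
    intro M
    induction M with
    | zero => intro i _; exact Nat.zero_le _
    | succ M ih =>
      intro i h
      have hm : M < k := by omega
      have h1 := ih ⟨M, hm⟩ rfl
      have h2 : g ⟨M, hm⟩ < g i := hg (by simp [Fin.lt_def]; omega)
      have := Fin.lt_def.mp h2
      omega
  intro i; exact H (i : ℕ) i rfl

lemma sum_pre_le (β : Fin n → ℝ) (hm : Monotone β) (S : Finset (Fin n)) :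
    ∑ j ∈ pre n S.card, β j ≤ ∑ j ∈ S, β j := by
  classical
  have hk : S.card ≤ n := by
    simpa using Finset.card_le_univ S
  have hS : ∑ j ∈ S, β j = ∑ i : Fin S.card, β (S.orderIsoOfFin rfl i) := by
    rw [← Finset.sum_coe_sort S β]
    exact (Equiv.sum_comp (S.orderIsoOfFin rfl).toEquiv (fun a => β a)).symm
  have hP : ∑ j ∈ pre n S.card, β j = ∑ i : Fin S.card, β ⟨i.1, lt_of_lt_of_le i.2 hk⟩ := by
    refine Finset.sum_bij (fun j hj => (⟨j.1, by simpa [pre] using hj⟩ : Fin S.card)) ?_ ?_ ?_ ?_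
    · intros; exact Finset.mem_univ _
    · intro a ha b hb hab; simpa [Fin.ext_iff] using hab
    · intro i _
      refine ⟨⟨i.1, lt_of_lt_of_le i.2 hk⟩, by simp [pre], by simp⟩
    · intro j hj; simp
  rw [hS, hP]
  refine Finset.sum_le_sum fun i _ => ?_
  apply hm
  rw [Fin.le_def]
  exact le_strictMono (fun i => ((S.orderIsoOfFin rfl i : Fin n))) 
    (fun a b hab => by
      have := (S.orderIsoOfFin rfl).strictMono hab
      exact Subtype.coe_lt_coe.mpr this) i

lemma xpt_eq_vert (k : ℕ) : xpt n ℓ u k = vert n ℓ u (pre n k) := by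
  funext j; simp [xpt, vert, pre]

lemma Lk_eq (β₀ : ℝ) (β : Fin n → ℝ) (k : ℕ) :
    Lk n ℓ u β₀ β k = β₀ + u * ∑ j ∈ pre n k, β j + ℓ * ∑ j ∈ (pre n k)ᶜ, β j := by
  unfold Lk
  have hfilter : Finset.univ.filter (fun j : Fin n => k ≤ (j : ℕ)) = (pre n k)ᶜ := by
    ext j; simp [pre, not_lt]
  rw [hfilter]
  rfl

lemma mPoly_vert (S : Finset (Fin n)) :
    mPoly n c (vert n ℓ u S) = mval n ℓ u c S.card := by
  have hk : S.card ≤ n := by simpa using Finset.card_le_univ S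
  obtain ⟨σ, hσ⟩ := vert_eq_comp (ℓ := ℓ) (u := u) S hk
  rw [hσ, mPoly_perm, mval, xpt_eq_vert]

lemma ineqLhs_vtx (β₀ : ℝ) (β : Fin n → ℝ) (β' : ℝ) (k : ℕ) :
    ineqLhs n β₀ β β' (vtx n ℓ u c k) = Lk n ℓ u β₀ β k + β' * mval n ℓ u c k := by
  unfold ineqLhs vtx
  rw [xpt_eq_vert, sum_mul_vert, Lk_eq]
  ring

lemma ineqLhs_vertex (β₀ : ℝ) (β : Fin n → ℝ) (β' : ℝ) (S : Finset (Fin n)) :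
    ineqLhs n β₀ β β' (vert n ℓ u S, mPoly n c (vert n ℓ u S)) =
      Lk n ℓ u β₀ β S.card + β' * mval n ℓ u c S.card
        + (u - ℓ) * (∑ j ∈ S, β j - ∑ j ∈ pre n S.card, β j) := by
  unfold ineqLhs
  rw [sum_mul_vert, mPoly_vert, Lk_eq, sum_compl_eq, sum_compl_eq]
  ring

lemma Lk_succ (β₀ : ℝ) (β : Fin n → ℝ) (t : ℕ) (ht : t < n) :
    Lk n ℓ u β₀ β (t+1) = Lk n ℓ u β₀ β t + (u - ℓ) * β ⟨t, ht⟩ := by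
  unfold Lk
  have hA : Finset.univ.filter (fun j : Fin n => (j : ℕ) < t + 1)
      = insert ⟨t, ht⟩ (Finset.univ.filter (fun j : Fin n => (j : ℕ) < t)) := by
    ext j
    simp only [Finset.mem_filter, Finset.mem_insert, Finset.mem_univ, true_and, Fin.ext_iff]
    omega
  have hB : Finset.univ.filter (fun j : Fin n => t ≤ (j : ℕ))
      = insert ⟨t, ht⟩ (Finset.univ.filter (fun j : Fin n => t + 1 ≤ (j : ℕ))) := by
    ext j
    simp only [Finset.mem_filter, Finset.mem_insert, Finset.mem_univ, true_and, Fin.ext_iff]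
    omega
  rw [hA, hB, Finset.sum_insert (by simp), Finset.sum_insert (by simp)]
  ring

lemma Lk_block (β₀ : ℝ) (β : Fin n → ℝ) (a : ℕ) : ∀ b, a ≤ b → b ≤ n →
    Lk n ℓ u β₀ β b = Lk n ℓ u β₀ β a
      + (u - ℓ) * ∑ i ∈ Finset.univ.filter (fun i : Fin n => a ≤ (i : ℕ) ∧ (i : ℕ) < b), β i := by
  intro b
  induction b with
  | zero =>
    intro hab _
    have : a = 0 := by omega
    subst this
    simp
  | succ b ih =>
    intro hab hbn
    rcases Nat.lt_or_ge a (b+1) with h | h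
    · have hab' : a ≤ b := by omega
      have hbn' : b < n := by omega
      have hins : Finset.univ.filter (fun i : Fin n => a ≤ (i : ℕ) ∧ (i : ℕ) < b + 1)
          = insert ⟨b, hbn'⟩ (Finset.univ.filter (fun i : Fin n => a ≤ (i : ℕ) ∧ (i : ℕ) < b)) := by
        ext j
        simp only [Finset.mem_filter, Finset.mem_insert, Finset.mem_univ, true_and, Fin.ext_iff]
        omega
      rw [Lk_succ β₀ β b hbn', ih hab' (le_of_lt hbn'), hins, Finset.sum_insert (by simp)]
      ring
    · have : a = b + 1 := by omega
      subst this
      have hemp : Finset.univ.filter (fun i : Fin n => b + 1 ≤ (i : ℕ) ∧ (i : ℕ) < b + 1) = ∅ := by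
        ext j
        simp only [Finset.mem_filter, Finset.notMem_empty, iff_false, Finset.mem_univ, true_and]
        omega
      rw [hemp, Finset.sum_empty, mul_zero, add_zero]

set_option maxHeartbeats 1000000 in
lemma keyF (hlu : ℓ < u) (βb βh : Fin n → ℝ) (βb₀ βh₀ : ℝ)
    (hmb : Monotone βb) (hmh : Monotone βh)
    (hδ : ∀ t, t ≤ n → Lk n ℓ u βb₀ βb t ≤ Lk n ℓ u βh₀ βh t)
    (S : Finset (Fin n))
    (hsum : ∑ j ∈ S, βh j = ∑ j ∈ pre n S.card, βh j)
    (hδk : Lk n ℓ u βh₀ βh S.card = Lk n ℓ u βb₀ βb S.card) :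
    ∑ j ∈ S, βb j = ∑ j ∈ pre n S.card, βb j := by
  classical
  have hk : S.card ≤ n := by simpa using Finset.card_le_univ S
  set k := S.card with hkdef
  set P := pre n k with hPdef
  have hPcard : P.card = k := card_pre n k hk
  set D1 := S \ P with hD1def
  set D2 := P \ S with hD2def
  have hgen : ∀ γ : Fin n → ℝ,
      ∑ j ∈ S, γ j - ∑ j ∈ P, γ j = ∑ j ∈ D1, γ j - ∑ j ∈ D2, γ j := by
    intro γ
    have h1 := Finset.sum_inter_add_sum_sdiff S P γ
    have h2 := Finset.sum_inter_add_sum_sdiff P S γ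
    rw [Finset.inter_comm] at h2
    linarith
  by_cases hD1e : D1 = ∅
  · have hsub : S ⊆ P := Finset.sdiff_eq_empty_iff_subset.mp hD1e
    have : S = P := Finset.eq_of_subset_of_card_le hsub (le_of_eq hPcard)
    rw [this]
  · have hne1 : D1.Nonempty := Finset.nonempty_of_ne_empty hD1e
    -- equal cards
    have hcard : (D1.card : ℝ) = (D2.card : ℝ) := by
      have := hgen (fun _ => (1:ℝ))
      simp only [Finset.sum_const, nsmul_eq_mul, mul_one] at this
      rw [hPcard] at this
      linarith
    have hcardN : D1.card = D2.card := by exact_mod_cast hcard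
    have hne2 : D2.Nonempty := by
      rw [← Finset.card_pos, ← hcardN, Finset.card_pos]; exact hne1
    set q := D1.max' hne1 with hqdef
    set p := D2.min' hne2 with hpdef
    have hD1lb : ∀ j ∈ D1, k ≤ (j : ℕ) := by
      intro j hj
      have := (Finset.mem_sdiff.mp hj).2
      simp [hPdef, pre] at this
      omega
    have hD2ub : ∀ j ∈ D2, (j : ℕ) < k := by
      intro j hj
      have := (Finset.mem_sdiff.mp hj).1
      simpa [hPdef, pre] using this
    have hkn : k < n := lt_of_le_of_lt (hD1lb q (D1.max'_mem hne1)) q.2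
    have hk1 : 1 ≤ k := by have := hD2ub p (D2.min'_mem hne2); omega
    set fa : Fin n := ⟨k-1, by omega⟩ with hfadef
    set fb : Fin n := ⟨k, hkn⟩ with hfbdef
    set r := D1.card with hrdef
    have hr : 0 < r := Finset.card_pos.mpr hne1
    have hrR : (0:ℝ) < (r:ℝ) := by exact_mod_cast hr
    have hsum12 : ∑ j ∈ D1, βh j = ∑ j ∈ D2, βh j := by
      have := hgen βh
      rw [hsum] at this
      simp at this
      linarith
    have h1 : (r:ℝ) * βh fb ≤ ∑ j ∈ D1, βh j := by
      have := Finset.card_nsmul_le_sum D1 βh (βh fb)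
        (fun i hi => hmh (by rw [Fin.le_def]; exact hD1lb i hi))
      simpa [nsmul_eq_mul] using this
    have h2 : ∑ j ∈ D2, βh j ≤ (r:ℝ) * βh fa := by
      have := Finset.sum_le_card_nsmul D2 βh (βh fa)
        (fun i hi => hmh (by rw [Fin.le_def]; show (i:ℕ) ≤ k - 1; have := hD2ub i hi; omega))
      rw [hcardN]
      simpa [nsmul_eq_mul] using this
    have hfab : βh fa ≤ βh fb := hmh (by rw [Fin.le_def]; exact Nat.sub_le k 1)
    have hfa_eq : βh fa = βh fb := by nlinarith
    have hsumD1 : ∑ j ∈ D1, βh j = (r:ℝ) * βh fb := by nlinarith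
    have hsumD2 : ∑ j ∈ D2, βh j = (r:ℝ) * βh fa := by nlinarith
    have ED1 : ∀ j ∈ D1, βh j = βh fb := by
      have hz : ∑ j ∈ D1, (βh j - βh fb) = 0 := by
        rw [Finset.sum_sub_distrib, Finset.sum_const, nsmul_eq_mul, hsumD1]
        ring
      intro j hj
      have := (Finset.sum_eq_zero_iff_of_nonneg
        (fun i hi => by
          have : βh fb ≤ βh i := hmh (by rw [Fin.le_def]; exact hD1lb i hi)
          linarith)).mp hz j hj
      linarith
    have ED2 : ∀ j ∈ D2, βh j = βh fa := by
      have hz : ∑ j ∈ D2, (βh j - βh fa) = 0 := by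
        rw [Finset.sum_sub_distrib, Finset.sum_const, nsmul_eq_mul, hcardN] at *
        rw [hsumD2]
        ring
      intro j hj
      have := (Finset.sum_eq_zero_iff_of_nonpos
        (fun i hi => by
          have hv : (i : ℕ) ≤ k - 1 := by have := hD2ub i hi; omega
          have : βh i ≤ βh fa := hmh (by rw [Fin.le_def]; exact hv)
          linarith)).mp hz j hj
      linarith
    -- window constancy of βh
    have hwin : ∀ i : Fin n, (p : ℕ) ≤ (i : ℕ) → (i : ℕ) ≤ (q : ℕ) → βh i = βh fb := by
      intro i hpi hiq
      have hpfa : βh p = βh fa := ED2 p (D2.min'_mem hne2)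
      have hqfb : βh q = βh fb := ED1 q (D1.max'_mem hne1)
      rcases lt_or_ge (i : ℕ) k with h | h
      · have l1 : βh p ≤ βh i := hmh (by rw [Fin.le_def]; exact hpi)
        have l2 : βh i ≤ βh fa := hmh (by rw [Fin.le_def]; show (i:ℕ) ≤ k - 1; omega)
        linarith
      · have l1 : βh fb ≤ βh i := hmh (by rw [Fin.le_def]; exact h)
        have l2 : βh i ≤ βh q := hmh (by rw [Fin.le_def]; exact hiq)
        linarith
    -- block sums
    set d : Fin n → ℝ := fun i => βh i - βb i with hddef
    have hdval : ∀ i, d i = βh i - βb i := fun i => rfl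
    set B1 := Finset.univ.filter (fun i : Fin n => (p:ℕ) ≤ (i:ℕ) ∧ (i:ℕ) < k) with hB1def
    set B2 := Finset.univ.filter (fun i : Fin n => k ≤ (i:ℕ) ∧ (i:ℕ) < (q:ℕ)+1) with hB2def
    have hpk : (p:ℕ) < k := hD2ub p (D2.min'_mem hne2)
    have hkq : k ≤ (q:ℕ) := hD1lb q (D1.max'_mem hne1)
    have hq1n : (q:ℕ) + 1 ≤ n := q.2
    have hul : (0:ℝ) < u - ℓ := by linarith
    have hS1 : ∑ i ∈ B1, d i ≤ 0 := by
      have hhh := Lk_block (n := n) (ℓ := ℓ) (u := u) βh₀ βh (p:ℕ) k (le_of_lt hpk) hk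
      have hhb := Lk_block (n := n) (ℓ := ℓ) (u := u) βb₀ βb (p:ℕ) k (le_of_lt hpk) hk
      have hδp := hδ (p:ℕ) (by omega)
      have hsub : (u - ℓ) * ∑ i ∈ B1, d i =
          (Lk n ℓ u βh₀ βh k - Lk n ℓ u βb₀ βb k)
          - (Lk n ℓ u βh₀ βh (p:ℕ) - Lk n ℓ u βb₀ βb (p:ℕ)) := by
        rw [hhh, hhb]
        rw [Finset.sum_congr rfl (fun i _ => hdval i), Finset.sum_sub_distrib]
        ring
      rw [hδk] at hsub
      have : (u - ℓ) * ∑ i ∈ B1, d i ≤ (u - ℓ) * 0 := by rw [mul_zero]; linarith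
      exact le_of_mul_le_mul_left this hul
    have hS2 : 0 ≤ ∑ i ∈ B2, d i := by
      have hhh := Lk_block (n := n) (ℓ := ℓ) (u := u) βh₀ βh k ((q:ℕ)+1) (by omega) hq1n
      have hhb := Lk_block (n := n) (ℓ := ℓ) (u := u) βb₀ βb k ((q:ℕ)+1) (by omega) hq1n
      have hδq := hδ ((q:ℕ)+1) hq1n
      have hsub : (u - ℓ) * ∑ i ∈ B2, d i =
          (Lk n ℓ u βh₀ βh ((q:ℕ)+1) - Lk n ℓ u βb₀ βb ((q:ℕ)+1))
          - (Lk n ℓ u βh₀ βh k - Lk n ℓ u βb₀ βb k) := by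
        rw [hhh, hhb]
        rw [Finset.sum_congr rfl (fun i _ => hdval i), Finset.sum_sub_distrib]
        ring
      rw [hδk] at hsub
      have : (u - ℓ) * 0 ≤ (u - ℓ) * ∑ i ∈ B2, d i := by rw [mul_zero]; linarith
      exact le_of_mul_le_mul_left this hul
    have hfbB2 : fb ∈ B2 := by simp [hB2def, hfbdef]; omega
    have hpB1 : p ∈ B1 := by simp [hB1def]; exact hpk
    -- each term of B2 is ≤ d fb
    have hB2le : ∀ i ∈ B2, d i ≤ d fb := by
      intro i hi
      simp only [hB2def, Finset.mem_filter, Finset.mem_univ, true_and] at hi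
      have hwi : βh i = βh fb := hwin i (by omega) (by omega)
      have hbi : βb fb ≤ βb i := hmb (by rw [Fin.le_def]; exact hi.1)
      rw [hdval i, hdval fb, hwi]
      linarith
    have hdfb0 : 0 ≤ d fb := by
      have hle := Finset.sum_le_card_nsmul B2 d (d fb) hB2le
      have hcpos : 0 < B2.card := Finset.card_pos.mpr ⟨fb, hfbB2⟩
      have hcposR : (0:ℝ) < (B2.card : ℝ) := by exact_mod_cast hcpos
      rw [nsmul_eq_mul] at hle
      nlinarith
    have hB1ge : ∀ i ∈ B1, d fb ≤ d i := by
      intro i hi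
      simp only [hB1def, Finset.mem_filter, Finset.mem_univ, true_and] at hi
      have hwi : βh i = βh fb := hwin i hi.1 (by omega)
      have hbi : βb i ≤ βb fb := hmb (by rw [Fin.le_def]; show (i:ℕ) ≤ k; omega)
      rw [hdval i, hdval fb, hwi]
      linarith
    have hB1zero : ∀ i ∈ B1, d i = 0 := by
      have hnn : ∀ i ∈ B1, 0 ≤ d i := fun i hi => le_trans hdfb0 (hB1ge i hi)
      have h0 : ∑ i ∈ B1, d i = 0 :=
        le_antisymm hS1 (Finset.sum_nonneg hnn)
      exact fun i hi => (Finset.sum_eq_zero_iff_of_nonneg hnn).mp h0 i hi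
    have hdfb : d fb = 0 := by
      have := hB1zero p hpB1
      have h1 := hB1ge p hpB1
      linarith
    have hB2zero : ∀ i ∈ B2, d i = 0 := by
      have hnp : ∀ i ∈ B2, d i ≤ 0 := fun i hi => le_trans (hB2le i hi) (le_of_eq hdfb)
      have h0 : ∑ i ∈ B2, d i = 0 :=
        le_antisymm (Finset.sum_nonpos hnp) hS2
      exact fun i hi => (Finset.sum_eq_zero_iff_of_nonpos hnp).mp h0 i hi
    -- D1 ⊆ B2, D2 ⊆ B1
    have hD1sub : ∀ j ∈ D1, j ∈ B2 := by
      intro j hj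
      simp only [hB2def, Finset.mem_filter, Finset.mem_univ, true_and]
      have h1 := hD1lb j hj
      have h2 : (j:ℕ) ≤ (q:ℕ) := D1.le_max' j hj
      omega
    have hD2sub : ∀ j ∈ D2, j ∈ B1 := by
      intro j hj
      simp only [hB1def, Finset.mem_filter, Finset.mem_univ, true_and]
      have h1 := hD2ub j hj
      have h2 : (p:ℕ) ≤ (j:ℕ) := D2.min'_le j hj
      omega
    have hsum1 : ∑ j ∈ D1, βb j = ∑ j ∈ D1, βh j := by
      refine Finset.sum_congr rfl fun j hj => ?_
      have := hB2zero j (hD1sub j hj)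
      rw [hdval j] at this
      linarith
    have hsum2 : ∑ j ∈ D2, βb j = ∑ j ∈ D2, βh j := by
      refine Finset.sum_congr rfl fun j hj => ?_
      have := hB1zero j (hD2sub j hj)
      rw [hdval j] at this
      linarith
    have := hgen βb
    rw [hsum1, hsum2, hsum12] at this
    linarith

lemma nonneg_on_box (hlu : ℓ < u) (a₀ b : ℝ) (a : Fin n → ℝ)
    (hvert : ∀ S : Finset (Fin n),
      0 ≤ a₀ + ∑ j, a j * vert n ℓ u S j + b * mPoly n c (vert n ℓ u S)) :
    ∀ x : Fin n → ℝ, (∀ j, x j ∈ Set.Icc ℓ u) →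
      0 ≤ a₀ + ∑ j, a j * x j + b * mPoly n c x := by
  classical
  suffices H : ∀ T : Finset (Fin n), ∀ x : Fin n → ℝ, (∀ j, x j ∈ Set.Icc ℓ u) →
      (∀ j, j ∉ T → x j = ℓ ∨ x j = u) → 0 ≤ a₀ + ∑ j, a j * x j + b * mPoly n c x by
    intro x hx
    exact H Finset.univ x hx (fun j hj => (hj (Finset.mem_univ j)).elim)
  intro T
  induction T using Finset.induction_on with
  | empty =>
    intro x hx hfree
    have hxv : x = vert n ℓ u (Finset.univ.filter (fun j => x j = u)) := by
      funext j
      rcases hfree j (by simp) with h | h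
      · rw [vert, if_neg]
        · exact h
        · simp only [Finset.mem_filter, Finset.mem_univ, true_and]
          rw [h]
          exact ne_of_lt hlu
      · rw [vert, if_pos]
        · exact h
        · simp only [Finset.mem_filter, Finset.mem_univ, true_and]
          exact h
    rw [hxv]
    exact hvert _
  | @insert j T' hjT ih =>
    intro x hx hfree
    obtain hmup := mPoly_update n c x j
    set A := (∑ i ∈ Finset.Icc 2 n, c i *
        ∑ J ∈ (Finset.powersetCard i (Finset.univ : Finset (Fin n))).filter
          (fun J => ¬ j ∈ J), ∏ j' ∈ J, x j') with hAdef
    set B := (∑ i ∈ Finset.Icc 2 n, c i *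
        ∑ J ∈ (Finset.powersetCard i (Finset.univ : Finset (Fin n))).filter
          (fun J => j ∈ J), ∏ j' ∈ J.erase j, x j') with hBdef
    set E := ∑ j' ∈ Finset.univ.erase j, a j' * x j' with hEdef
    have hg : ∀ s : ℝ, a₀ + ∑ j', a j' * Function.update x j s j'
        + b * mPoly n c (Function.update x j s) = (a₀ + E + b * A) + s * (a j + b * B) := by
      intro s
      rw [mPoly_update n c x j s]
      have hsum : ∑ j', a j' * Function.update x j s j' = E + a j * s := by
        rw [← Finset.sum_erase_add Finset.univ _ (Finset.mem_univ j)]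
        rw [Function.update_self]
        congr 1
        refine Finset.sum_congr rfl fun i hi => ?_
        rw [Function.update_of_ne (Finset.ne_of_mem_erase hi)]
      rw [hsum]
      ring
    have hfree' : ∀ s : ℝ, s = ℓ ∨ s = u → ∀ i, i ∉ T' → Function.update x j s i = ℓ ∨ Function.update x j s i = u := by
      intro s hs i hi
      rcases eq_or_ne i j with rfl | hij
      · rw [Function.update_self]; exact hs
      · rw [Function.update_of_ne hij]
        exact hfree i (by simp [hij, hi])
    have hbox' : ∀ s : ℝ, s ∈ Set.Icc ℓ u → ∀ i, Function.update x j s i ∈ Set.Icc ℓ u := by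
      intro s hs i
      rcases eq_or_ne i j with rfl | hij
      · rw [Function.update_self]; exact hs
      · rw [Function.update_of_ne hij]; exact hx i
    have P1 := ih (Function.update x j ℓ) (hbox' ℓ (by constructor <;> linarith) )
      (hfree' ℓ (Or.inl rfl))
    have P2 := ih (Function.update x j u) (hbox' u (by constructor <;> linarith))
      (hfree' u (Or.inr rfl))
    rw [hg ℓ] at P1
    rw [hg u] at P2
    set t := (x j - ℓ) / (u - ℓ) with htdef
    have hul : (0:ℝ) < u - ℓ := by linarith
    have ht0 : 0 ≤ t := div_nonneg (by have := (hx j).1; linarith) (le_of_lt hul)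
    have ht1 : t ≤ 1 := by
      rw [div_le_one hul]
      have := (hx j).2
      linarith
    have hconv : x j = (1 - t) * ℓ + t * u := by
      rw [htdef]
      field_simp
      ring
    have hfinal : a₀ + ∑ j', a j' * x j' + b * mPoly n c x
        = (1 - t) * ((a₀ + E + b * A) + ℓ * (a j + b * B))
          + t * ((a₀ + E + b * A) + u * (a j + b * B)) := by
      have := hg (x j)
      rw [Function.update_eq_self] at this
      rw [this, hconv]
      ring
    rw [hfinal]
    have h1 : 0 ≤ (1 - t) * ((a₀ + E + b * A) + ℓ * (a j + b * B)) :=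
      mul_nonneg (by linarith) P1
    have h2 : 0 ≤ t * ((a₀ + E + b * A) + u * (a j + b * B)) := mul_nonneg ht0 P2
    linarith

lemma vertex_tight (hlu : ℓ < u) (βb βh : Fin n → ℝ) (βb₀ βh₀ β' : ℝ)
    (hmb : Monotone βb) (hmh : Monotone βh)
    (hvbk : ∀ t, t ≤ n → 0 ≤ Lk n ℓ u βb₀ βb t + β' * mval n ℓ u c t)
    (hvhk : ∀ t, t ≤ n → 0 ≤ Lk n ℓ u βh₀ βh t + β' * mval n ℓ u c t)
    (hδ : ∀ t, t ≤ n → Lk n ℓ u βb₀ βb t ≤ Lk n ℓ u βh₀ βh t)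
    (S : Finset (Fin n))
    (htight : ineqLhs n βh₀ βh β' (vert n ℓ u S, mPoly n c (vert n ℓ u S)) = 0) :
    ineqLhs n βb₀ βb β' (vert n ℓ u S, mPoly n c (vert n ℓ u S)) = 0 := by
  have hk : S.card ≤ n := by simpa using Finset.card_le_univ S
  rw [ineqLhs_vertex] at htight
  have hpos : (0:ℝ) < u - ℓ := by linarith
  have hsle : 0 ≤ ∑ j ∈ S, βh j - ∑ j ∈ pre n S.card, βh j := by
    have := sum_pre_le βh hmh S
    linarith
  have hterm2 : 0 ≤ (u - ℓ) * (∑ j ∈ S, βh j - ∑ j ∈ pre n S.card, βh j) :=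
    mul_nonneg (le_of_lt hpos) hsle
  have e1 : Lk n ℓ u βh₀ βh S.card + β' * mval n ℓ u c S.card = 0 := by
    have := hvhk S.card hk
    linarith
  have e2 : ∑ j ∈ S, βh j = ∑ j ∈ pre n S.card, βh j := by
    have h0 : (u - ℓ) * (∑ j ∈ S, βh j - ∑ j ∈ pre n S.card, βh j) = 0 := by linarith
    have := (mul_eq_zero.mp h0).resolve_left (ne_of_gt hpos)
    linarith
  have e3 : Lk n ℓ u βh₀ βh S.card = Lk n ℓ u βb₀ βb S.card := by
    have h1 := hvbk S.card hk
    have h2 := hδ S.card hk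
    linarith
  have e4 := keyF hlu βb βh βb₀ βh₀ hmb hmh hδ S e2 e3
  rw [ineqLhs_vertex, e4, ← e3]
  rw [sub_self, mul_zero, add_zero]
  exact e1

lemma halfspace (F0 : ℝ) (aa : Fin n → ℝ) (bb : ℝ)
    (h : ∀ q ∈ Gset n ℓ u c, 0 ≤ F0 + ∑ j, aa j * q.1 j + bb * q.2) :
    ∀ p ∈ convexHull ℝ (Gset n ℓ u c), 0 ≤ F0 + ∑ j, aa j * p.1 j + bb * p.2 := by
  have hconv : Convex ℝ {p : (Fin n → ℝ) × ℝ | 0 ≤ F0 + ∑ j, aa j * p.1 j + bb * p.2} := by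
    intro p hp q hq α β hα hβ hαβ
    simp only [Set.mem_setOf_eq] at hp hq ⊢
    have hsum : ∑ j, aa j * (α • p + β • q).1 j
        = α * ∑ j, aa j * p.1 j + β * ∑ j, aa j * q.1 j := by
      rw [Finset.mul_sum, Finset.mul_sum, ← Finset.sum_add_distrib]
      refine Finset.sum_congr rfl fun j _ => ?_
      simp only [Prod.fst_add, Prod.smul_fst, Pi.add_apply, Pi.smul_apply, smul_eq_mul]
      ring
    have hsnd : (α • p + β • q).2 = α * p.2 + β * q.2 := by
      simp only [Prod.snd_add, Prod.smul_snd, smul_eq_mul]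
    rw [hsum, hsnd]
    have key : F0 + (α * ∑ j, aa j * p.1 j + β * ∑ j, aa j * q.1 j)
        + bb * (α * p.2 + β * q.2)
        = α * (F0 + ∑ j, aa j * p.1 j + bb * p.2)
          + β * (F0 + ∑ j, aa j * q.1 j + bb * q.2) := by
      have h1 : α = 1 - β := by linarith
      rw [h1]; ring
    rw [key]
    exact add_nonneg (mul_nonneg hα hp) (mul_nonneg hβ hq)
  intro p hp
  exact convexHull_min h hconv hp

end St6

open St6 Module in
set_option maxHeartbeats 1000000 in
/-- Given two valid core inequalities with the same `β′`, if
`L_k(β̄₀,β̄) ≤ L_k(β̂₀,β̂)` for all `k ∈ {0,…,n}` with strict inequality for some `k`,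
then the second inequality is not facet-defining. -/
theorem stmt6 (n : ℕ) (hn : 2 ≤ n) (ℓ u : ℝ) (hlu : ℓ < u) (c : ℕ → ℝ)
    (βb₀ : ℝ) (βb : Fin n → ℝ) (βh₀ : ℝ) (βh : Fin n → ℝ) (β' : ℝ)
    (hcoreb : IsCore n βb β') (hvalidb : IsValid n ℓ u c βb₀ βb β')
    (hcoreh : IsCore n βh β') (hvalidh : IsValid n ℓ u c βh₀ βh β')
    (hle : ∀ k ≤ n, Lk n ℓ u βb₀ βb k ≤ Lk n ℓ u βh₀ βh k)
    (hlt : ∃ k ≤ n, Lk n ℓ u βb₀ βb k < Lk n ℓ u βh₀ βh k) :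
    ¬ IsFacet n ℓ u c βh₀ βh β' := by
  classical
  intro hfacet
  obtain ⟨pts, hindep, hpts⟩ := hfacet
  obtain ⟨hb'mem, hmb⟩ := hcoreb
  obtain ⟨hh'mem, hmh⟩ := hcoreh
  have hb'ne : β' ≠ 0 := by rcases hh'mem with h | h <;> rw [h] <;> norm_num
  have hGv : ∀ t : ℕ, vtx n ℓ u c t ∈ Gset n ℓ u c := by
    intro t
    refine ⟨fun j => ?_, rfl⟩
    unfold vtx xpt
    dsimp only
    split
    · exact ⟨le_of_lt hlu, le_refl u⟩
    · exact ⟨le_refl ℓ, le_of_lt hlu⟩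
  have hGS : ∀ S : Finset (Fin n),
      (vert n ℓ u S, mPoly n c (vert n ℓ u S)) ∈ Gset n ℓ u c := by
    intro S
    refine ⟨fun j => ?_, rfl⟩
    unfold vert
    dsimp only
    split
    · exact ⟨le_of_lt hlu, le_refl u⟩
    · exact ⟨le_refl ℓ, le_of_lt hlu⟩
  have hvbk : ∀ t, t ≤ n → 0 ≤ Lk n ℓ u βb₀ βb t + β' * mval n ℓ u c t := by
    intro t ht
    have := hvalidb _ (subset_convexHull ℝ _ (hGv t))
    rwa [ineqLhs_vtx] at this
  have hvhk : ∀ t, t ≤ n → 0 ≤ Lk n ℓ u βh₀ βh t + β' * mval n ℓ u c t := by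
    intro t ht
    have := hvalidh _ (subset_convexHull ℝ _ (hGv t))
    rwa [ineqLhs_vtx] at this
  have hne : (Finset.univ : Finset (Finset (Fin n))).Nonempty := ⟨∅, Finset.mem_univ ∅⟩
  set C : ℝ := Finset.univ.sup' hne (fun S : Finset (Fin n) =>
    ineqLhs n βb₀ βb β' (vert n ℓ u S, mPoly n c (vert n ℓ u S))
      / ineqLhs n βh₀ βh β' (vert n ℓ u S, mPoly n c (vert n ℓ u S))) with hCdef
  have hCS : ∀ S : Finset (Fin n),
      ineqLhs n βb₀ βb β' (vert n ℓ u S, mPoly n c (vert n ℓ u S))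
        ≤ C * ineqLhs n βh₀ βh β' (vert n ℓ u S, mPoly n c (vert n ℓ u S)) := by
    intro S
    have hh0 : 0 ≤ ineqLhs n βh₀ βh β' (vert n ℓ u S, mPoly n c (vert n ℓ u S)) :=
      hvalidh _ (subset_convexHull ℝ _ (hGS S))
    rcases eq_or_lt_of_le hh0 with heq | hpos
    · have hb0 := vertex_tight hlu βb βh βb₀ βh₀ β' hmb hmh hvbk hvhk hle S heq.symm
      rw [hb0, ← heq, mul_zero]
    · have hsup := Finset.le_sup' (fun S : Finset (Fin n) =>
        ineqLhs n βb₀ βb β' (vert n ℓ u S, mPoly n c (vert n ℓ u S))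
          / ineqLhs n βh₀ βh β' (vert n ℓ u S, mPoly n c (vert n ℓ u S)))
        (Finset.mem_univ S)
      rw [← hCdef] at hsup
      exact (div_le_iff₀ hpos).mp hsup
  have hid : ∀ p : (Fin n → ℝ) × ℝ,
      (C * βh₀ - βb₀) + ∑ j, (C * βh j - βb j) * p.1 j + ((C - 1) * β') * p.2
        = C * ineqLhs n βh₀ βh β' p - ineqLhs n βb₀ βb β' p := by
    intro p
    unfold ineqLhs
    have h1 : ∑ j, (C * βh j - βb j) * p.1 j
        = C * ∑ j, βh j * p.1 j - ∑ j, βb j * p.1 j := by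
      rw [Finset.mul_sum, ← Finset.sum_sub_distrib]
      exact Finset.sum_congr rfl fun j _ => by ring
    rw [h1]; ring
  have hΦ : ∀ p ∈ convexHull ℝ (Gset n ℓ u c),
      0 ≤ (C * βh₀ - βb₀) + ∑ j, (C * βh j - βb j) * p.1 j + ((C - 1) * β') * p.2 := by
    apply halfspace
    intro q hq
    obtain ⟨hqb, hqm⟩ := hq
    rw [hqm]
    refine nonneg_on_box hlu (C * βh₀ - βb₀) ((C - 1) * β') (fun j => C * βh j - βb j)
      (fun S => ?_) q.1 hqb
    have h2 := hCS S
    have h3 := hid (vert n ℓ u S, mPoly n c (vert n ℓ u S))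
    dsimp only at h3
    linarith
  have hBzero : ∀ i, ineqLhs n βb₀ βb β' (pts i) = 0 := by
    intro i
    obtain ⟨hmem, hex⟩ := hpts i
    have h1 := hΦ _ hmem
    rw [hid (pts i), hex, mul_zero] at h1
    have h2 := hvalidb _ hmem
    linarith
  have hψ : ∀ i, (βh₀ - βb₀) + ∑ j, (βh j - βb j) * (pts i).1 j = 0 := by
    intro i
    have hb := hBzero i
    have hh : ineqLhs n βh₀ βh β' (pts i) = 0 := (hpts i).2
    unfold ineqLhs at hb hh
    have h1 : ∑ j, (βh j - βb j) * (pts i).1 j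
        = ∑ j, βh j * (pts i).1 j - ∑ j, βb j * (pts i).1 j := by
      rw [← Finset.sum_sub_distrib]
      exact Finset.sum_congr rfl fun j _ => by ring
    rw [h1]; linarith
  obtain ⟨ks, hksn, hklt⟩ := hlt
  by_cases hd0 : ∀ j, βh j = βb j
  · have h0 := hψ 0
    have hz : ∑ j, (βh j - βb j) * (pts 0).1 j = 0 :=
      Finset.sum_eq_zero fun j _ => by rw [hd0 j]; ring
    have hβ₀ : βh₀ = βb₀ := by linarith
    have hs : ∀ T : Finset (Fin n), ∑ j ∈ T, βb j = ∑ j ∈ T, βh j :=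
      fun T => Finset.sum_congr rfl fun j _ => (hd0 j).symm
    have hLeq : Lk n ℓ u βb₀ βb ks = Lk n ℓ u βh₀ βh ks := by
      unfold Lk
      rw [hs, hs, hβ₀]
    linarith
  · push_neg at hd0
    obtain ⟨j₀, hj₀⟩ := hd0
    let Λ1 : ((Fin n → ℝ) × ℝ) →ₗ[ℝ] ℝ :=
      { toFun := fun p => ∑ j, βh j * p.1 j + β' * p.2
        map_add' := by
          intro p q
          simp only [Prod.fst_add, Prod.snd_add, Pi.add_apply]
          rw [show ∑ j, βh j * (p.1 j + q.1 j) = ∑ j, βh j * p.1 j + ∑ j, βh j * q.1 j from by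
            rw [← Finset.sum_add_distrib]; exact Finset.sum_congr rfl fun j _ => by ring]
          ring
        map_smul' := by
          intro r p
          simp only [Prod.smul_fst, Prod.smul_snd, Pi.smul_apply, smul_eq_mul, RingHom.id_apply]
          rw [show ∑ j, βh j * (r * p.1 j) = r * ∑ j, βh j * p.1 j from by
            rw [Finset.mul_sum]; exact Finset.sum_congr rfl fun j _ => by ring]
          ring }
    let Λ2 : ((Fin n → ℝ) × ℝ) →ₗ[ℝ] ℝ :=
      { toFun := fun p => ∑ j, (βh j - βb j) * p.1 j
        map_add' := by
          intro p q
          simp only [Prod.fst_add, Pi.add_apply]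
          rw [← Finset.sum_add_distrib]
          exact Finset.sum_congr rfl fun j _ => by ring
        map_smul' := by
          intro r p
          simp only [Prod.smul_fst, Pi.smul_apply, smul_eq_mul, RingHom.id_apply]
          rw [Finset.mul_sum]
          exact Finset.sum_congr rfl fun j _ => by ring }
    have hΛ1pts : ∀ i, Λ1 (pts i) = -βh₀ := by
      intro i
      have hh : ineqLhs n βh₀ βh β' (pts i) = 0 := (hpts i).2
      unfold ineqLhs at hh
      show ∑ j, βh j * (pts i).1 j + β' * (pts i).2 = -βh₀
      linarith
    have hΛ2pts : ∀ i, Λ2 (pts i) = -(βh₀ - βb₀) := by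
      intro i
      have := hψ i
      show ∑ j, (βh j - βb j) * (pts i).1 j = -(βh₀ - βb₀)
      linarith
    have hli0 := (affineIndependent_iff_linearIndependent_vsub ℝ pts 0).mp hindep
    have hmemK : ∀ i : {x : Fin (n+1) // x ≠ 0},
        (pts i -ᵥ pts 0) ∈ LinearMap.ker Λ1 ⊓ LinearMap.ker Λ2 := by
      intro i
      rw [Submodule.mem_inf]
      constructor
      · rw [LinearMap.mem_ker, vsub_eq_sub, map_sub, hΛ1pts, hΛ1pts, sub_self]
      · rw [LinearMap.mem_ker, vsub_eq_sub, map_sub, hΛ2pts, hΛ2pts, sub_self]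
    have hspan : Submodule.span ℝ
        (Set.range (fun i : {x : Fin (n+1) // x ≠ 0} => pts i -ᵥ pts 0))
        ≤ LinearMap.ker Λ1 ⊓ LinearMap.ker Λ2 := by
      rw [Submodule.span_le]
      rintro v ⟨i, rfl⟩
      exact hmemK i
    have hcard : Fintype.card {x : Fin (n+1) // x ≠ 0} = n := by
      simp [Fintype.card_subtype_compl, Fintype.card_subtype_eq]
    have hfr : finrank ℝ (Submodule.span ℝ
        (Set.range (fun i : {x : Fin (n+1) // x ≠ 0} => pts i -ᵥ pts 0))) = n := by
      rw [finrank_span_eq_card hli0, hcard]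
    have hKge : n ≤ finrank ℝ ↥(LinearMap.ker Λ1 ⊓ LinearMap.ker Λ2) := by
      have h1 : finrank ℝ (Submodule.span ℝ
          (Set.range (fun i : {x : Fin (n+1) // x ≠ 0} => pts i -ᵥ pts 0)))
          ≤ finrank ℝ ↥(LinearMap.ker Λ1 ⊓ LinearMap.ker Λ2) := Submodule.finrank_mono hspan
      omega
    have hΛ1w1 : Λ1 ((0 : Fin n → ℝ), (1:ℝ)) = β' := by
      show ∑ j, βh j * ((0 : Fin n → ℝ) j) + β' * 1 = β'
      simp
    have hsurj : Function.Surjective Λ1 := by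
      intro r
      refine ⟨(r / β') • ((0 : Fin n → ℝ), (1:ℝ)), ?_⟩
      rw [map_smul, hΛ1w1, smul_eq_mul]
      field_simp
    have hker1 : finrank ℝ (LinearMap.ker Λ1) = n := by
      have h := LinearMap.finrank_range_add_finrank_ker Λ1
      rw [LinearMap.range_eq_top.mpr hsurj, finrank_top] at h
      have hE : finrank ℝ ((Fin n → ℝ) × ℝ) = n + 1 := by
        rw [Module.finrank_prod, Module.finrank_pi, finrank_self, Fintype.card_fin]
      rw [hE, finrank_self] at h
      omega
    set w2 : (Fin n → ℝ) × ℝ :=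
      ((fun j => βh j - βb j), (0:ℝ))
        - ((Λ1 ((fun j => βh j - βb j), (0:ℝ))) / β') • ((0 : Fin n → ℝ), (1:ℝ)) with hw2def
    have hw2k1 : w2 ∈ LinearMap.ker Λ1 := by
      rw [LinearMap.mem_ker, hw2def, map_sub, map_smul, hΛ1w1, smul_eq_mul]
      field_simp
      ring
    have hΛ2w1 : Λ2 ((0 : Fin n → ℝ), (1:ℝ)) = 0 := by
      show ∑ j, (βh j - βb j) * ((0 : Fin n → ℝ) j) = 0
      simp
    have hΛ2d : Λ2 ((fun j => βh j - βb j), (0:ℝ)) = ∑ j, (βh j - βb j) * (βh j - βb j) := rfl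
    have hw2Λ2 : Λ2 w2 = ∑ j, (βh j - βb j) * (βh j - βb j) := by
      rw [hw2def, map_sub, map_smul, hΛ2w1, smul_eq_mul, mul_zero, sub_zero, hΛ2d]
    have hpos2 : 0 < ∑ j, (βh j - βb j) * (βh j - βb j) := by
      refine Finset.sum_pos' (fun j _ => mul_self_nonneg _) ⟨j₀, Finset.mem_univ j₀, ?_⟩
      exact mul_self_pos.mpr (sub_ne_zero.mpr hj₀)
    have hKlt : LinearMap.ker Λ1 ⊓ LinearMap.ker Λ2 < LinearMap.ker Λ1 := by
      refine lt_of_le_of_ne inf_le_left (fun hEq => ?_)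
      have hw2K : w2 ∈ LinearMap.ker Λ1 ⊓ LinearMap.ker Λ2 := by rw [hEq]; exact hw2k1
      have h2 : Λ2 w2 = 0 := by
        have := (Submodule.mem_inf.mp hw2K).2
        rwa [LinearMap.mem_ker] at this
      rw [hw2Λ2] at h2
      linarith
    have hfin := Submodule.finrank_lt_finrank_of_lt hKlt
    rw [hker1] at hfin
    omega
end
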